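/- There is no 3×3 integer matrix A with zero diagonal such that det(Diag(x₁,x₂,x₃) − A) = x₁x₂x₃ − 19x₁ + 2x₂ + 3x₃ − 23. -/
import Mathlib


open MvPolynomial

/-- no 3×3 integer matrix with zero diagonal has
`x₁x₂x₃ − 19x₁ + 2x₂ + 3x₃ − 23` as its determinant polynomial. -/
theorem stmt_16 :
    ¬ ∃ A : Matrix (Fin 3) (Fin 3) ℤ, (∀ i, A i i = 0) ∧
      (Matrix.diagonal (fun i => (X i : MvPolynomial (Fin 3) ℤ)) - A.map C).det =
        X 0 * X 1 * X 2 - C 19 * X 0 + C 2 * X 1 + C 3 * X 2 - C 23 := by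
  rintro ⟨A, hdiag, hdet⟩
  have key : ∀ v : Fin 3 → ℤ,
      v 0 * v 1 * v 2 - (A 1 2 * A 2 1) * v 0 - (A 0 2 * A 2 0) * v 1
        - (A 0 1 * A 1 0) * v 2 - (A 0 1 * A 1 2 * A 2 0 + A 0 2 * A 1 0 * A 2 1)
      = v 0 * v 1 * v 2 - 19 * v 0 + 2 * v 1 + 3 * v 2 - 23 := by
    intro v
    have h := congrArg (eval v) hdet
    simp [Matrix.det_fin_three, Matrix.sub_apply, Matrix.diagonal_apply,
      Matrix.map_apply, hdiag] at h
    linear_combination h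
  have h000 := key ![0,0,0]
  have h100 := key ![1,0,0]
  have h010 := key ![0,1,0]
  have h001 := key ![0,0,1]
  simp at h000 h100 h010 h001
  set s := A 0 1 * A 1 2 * A 2 0 with hs
  set t := A 0 2 * A 1 0 * A 2 1 with ht
  have hp : A 1 2 * A 2 1 = 19 := by linarith
  have hq : A 0 2 * A 2 0 = -2 := by linarith
  have hr : A 0 1 * A 1 0 = -3 := by linarith
  have hsum : s + t = 23 := by linarith
  have hst : s * t = 114 := by
    have : s * t = (A 1 2 * A 2 1) * (A 0 2 * A 2 0) * (A 0 1 * A 1 0) := by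
      rw [hs, ht]; ring
    rw [this, hp, hq, hr]; norm_num
  have hquad : s ^ 2 - 23 * s + 114 = 0 := by nlinarith [hsum, hst]
  have h7 : ((s : ZMod 7) ^ 2 - 23 * (s : ZMod 7) + 114 = 0) := by
    have := congrArg (fun z : ℤ => (z : ZMod 7)) hquad
    push_cast at this
    simpa using this
  revert h7
  generalize (s : ZMod 7) = u
  revert u
  decide
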